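/- Let n ≥ 2, m ≥ 1, and for each α ∈ Fin m let A^α be a real symmetric n × n matrix. Set H² := (1/n²) ∑_α (trace A^α)² and s := ∑_α ∑_{i,j} (A^α i j)². Then s ≥ n H², and ∑_α [ (trace A^α)(A^α 0 0) − ∑_j (A^α 0 j)² ] ≥ ((n−1)/n) ( 2n H² − s − (n−2) √( n H² (s − n H²) / (n−1) ) ). -/

import Mathlib

lemma aux1 {n : ℕ} (hn : 2 ≤ n) (M : Matrix (Fin n) (Fin n) ℝ) (hM : M.IsSymm) :
    (M ⟨0, by omega⟩ ⟨0, by omega⟩)^2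
      + 2 * ∑ j ∈ Finset.univ.erase ⟨0, by omega⟩, (M ⟨0, by omega⟩ j)^2
      + (Matrix.trace M - M ⟨0, by omega⟩ ⟨0, by omega⟩)^2 / ((n:ℝ) - 1)
      ≤ ∑ i, ∑ j, M i j ^ 2 := by
  have hz0 : (0 : ℕ) < n := by omega
  set z : Fin n := ⟨0, hz0⟩ with hzdef
  have hz : z ∈ (Finset.univ : Finset (Fin n)) := Finset.mem_univ z
  have hsym : ∀ i j, M i j = M j i := fun i j => by conv_lhs => rw [← hM, Matrix.transpose_apply]
  have htr : Matrix.trace M = ∑ i, M i i := by simp [Matrix.trace, Matrix.diag]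
  -- split outer sum
  have hsplit : ∑ i, ∑ j, M i j ^ 2
      = ∑ i ∈ Finset.univ.erase z, ∑ j, M i j ^ 2 + ∑ j, M z j ^ 2 :=
    (Finset.sum_erase_add _ _ hz).symm
  have hrow : ∑ j, M z j ^ 2
      = ∑ j ∈ Finset.univ.erase z, M z j ^ 2 + M z z ^ 2 :=
    (Finset.sum_erase_add _ _ hz).symm
  -- lower bound for each i ≠ z
  have hrowi : ∀ i ∈ Finset.univ.erase z, M i i ^ 2 + M z i ^ 2 ≤ ∑ j, M i j ^ 2 := by
    intro i hi
    have hne : i ≠ z := Finset.ne_of_mem_erase hi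
    have hsub : ({i, z} : Finset (Fin n)) ⊆ Finset.univ := Finset.subset_univ _
    have := Finset.sum_le_sum_of_subset_of_nonneg hsub
      (fun j _ _ => sq_nonneg (M i j)) (f := fun j => M i j ^ 2)
    rw [Finset.sum_pair hne] at this
    rw [hsym z i]
    linarith
  have hstep : ∑ i ∈ Finset.univ.erase z, (M i i ^ 2 + M z i ^ 2)
      ≤ ∑ i ∈ Finset.univ.erase z, ∑ j, M i j ^ 2 :=
    Finset.sum_le_sum hrowi
  rw [Finset.sum_add_distrib] at hstep
  have hcol : ∑ i ∈ Finset.univ.erase z, M z i ^ 2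
      = ∑ j ∈ Finset.univ.erase z, M z j ^ 2 := rfl
  -- Cauchy-Schwarz on the diagonal of the block
  have hcard : ((Finset.univ.erase z).card : ℝ) = (n : ℝ) - 1 := by
    rw [Finset.card_erase_of_mem hz, Finset.card_univ, Fintype.card_fin]
    have : (1:ℕ) ≤ n := by omega
    push_cast [Nat.cast_sub this]
    ring
  have hcs := Finset.sum_mul_sq_le_sq_mul_sq (Finset.univ.erase z)
    (fun i => M i i) (fun _ => (1:ℝ))
  simp only [mul_one, one_pow, Finset.sum_const, nsmul_eq_mul] at hcs
  rw [hcard] at hcs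
  have hdiag : ∑ i ∈ Finset.univ.erase z, M i i = Matrix.trace M - M z z := by
    rw [htr, ← Finset.sum_erase_add _ _ hz]; ring
  rw [hdiag] at hcs
  have hn1 : (0:ℝ) < (n:ℝ) - 1 := by
    have : (2:ℝ) ≤ (n:ℝ) := by exact_mod_cast hn
    linarith
  have hdivle : (Matrix.trace M - M z z)^2 / ((n:ℝ) - 1)
      ≤ ∑ i ∈ Finset.univ.erase z, M i i ^ 2 := by
    rw [div_le_iff₀ hn1]
    linarith [hcs]
  linarith [hsplit.ge, hrow.ge, hstep, hdivle]

set_option maxHeartbeats 1000000 in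
theorem stmt_13 (n m : ℕ) (hn : 2 ≤ n) (hm : 1 ≤ m)
    (A : Fin m → Matrix (Fin n) (Fin n) ℝ) (hA : ∀ α, (A α).IsSymm)
    (H2 s : ℝ)
    (hH2 : H2 = (1 / (n : ℝ) ^ 2) * ∑ α, (Matrix.trace (A α)) ^ 2)
    (hs : s = ∑ α, ∑ i, ∑ j, (A α i j) ^ 2) :
    s ≥ (n : ℝ) * H2 ∧
    ∑ α, (Matrix.trace (A α) * A α ⟨0, by omega⟩ ⟨0, by omega⟩
        - ∑ j, (A α ⟨0, by omega⟩ j) ^ 2)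
      ≥ (((n : ℝ) - 1) / n) *
          (2 * n * H2 - s -
            ((n : ℝ) - 2) * Real.sqrt ((n : ℝ) * H2 * (s - (n : ℝ) * H2) / ((n : ℝ) - 1))) := by
  have hz0 : (0 : ℕ) < n := by omega
  set z : Fin n := ⟨0, hz0⟩ with hzdef
  set N : ℝ := (n : ℝ) with hNdef
  have hN : (2:ℝ) ≤ N := by rw [hNdef]; exact_mod_cast hn
  have hNpos : (0:ℝ) < N := by linarith
  have hN1 : (0:ℝ) < N - 1 := by linarith
  have hNne : N ≠ 0 := ne_of_gt hNpos
  have hN1ne : N - 1 ≠ 0 := ne_of_gt hN1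
  set t : Fin m → ℝ := fun α => Matrix.trace (A α) with ht
  set a : Fin m → ℝ := fun α => A α z z with ha
  set x : Fin m → ℝ := fun α => a α - t α / N with hx
  set Bq : Fin m → ℝ := fun α => ∑ j ∈ Finset.univ.erase z, (A α z j)^2 with hBq
  set T : ℝ := ∑ α, t α * x α with hT
  set X : ℝ := ∑ α, (x α)^2 with hX
  set Bt : ℝ := ∑ α, Bq α with hBtd
  set S2 : ℝ := ∑ α, (t α)^2 with hS2
  have hXnn : 0 ≤ X := Finset.sum_nonneg fun α _ => sq_nonneg _
  have hS2nn : 0 ≤ S2 := Finset.sum_nonneg fun α _ => sq_nonneg _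
  have hBtnn : 0 ≤ Bt :=
    Finset.sum_nonneg fun α _ => Finset.sum_nonneg fun j _ => sq_nonneg _
  have hS2H2 : S2 = N^2 * H2 := by
    rw [hH2]; field_simp [hNne, hN1ne]
  -- lower bound for s
  have hsge : S2 / N + (N / (N - 1)) * X + 2 * Bt ≤ s := by
    have h1 : ∀ α : Fin m, (a α)^2 + 2 * Bq α + (t α - a α)^2 / (N - 1)
        ≤ ∑ i, ∑ j, (A α i j)^2 := fun α => aux1 hn (A α) (hA α)
    have h2 : ∀ α : Fin m, (a α)^2 + 2 * Bq α + (t α - a α)^2 / (N - 1)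
        = (t α)^2 / N + (N / (N - 1)) * (x α)^2 + 2 * Bq α := by
      intro α
      have hxa : a α = x α + t α / N := by simp [hx]
      rw [hxa]
      field_simp [hNne, hN1ne]
      ring
    have h3 : ∑ α, ((t α)^2 / N + (N / (N - 1)) * (x α)^2 + 2 * Bq α)
        ≤ ∑ α, ∑ i, ∑ j, (A α i j)^2 := by
      apply Finset.sum_le_sum
      intro α _
      rw [← h2 α]; exact h1 α
    rw [hs]
    calc S2 / N + (N / (N - 1)) * X + 2 * Bt
        = ∑ α, ((t α)^2 / N + (N / (N - 1)) * (x α)^2 + 2 * Bq α) := by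
          rw [hS2, hX, hBtd, Finset.sum_add_distrib, Finset.sum_add_distrib,
            ← Finset.sum_div, Finset.mul_sum, Finset.mul_sum]
      _ ≤ _ := h3
  -- identity for the Ricci sum
  have hQ : ∑ α, (Matrix.trace (A α) * A α z z - ∑ j, (A α z j) ^ 2)
      = ((N - 1) / N^2) * S2 + ((N - 2) / N) * T - X - Bt := by
    have hper : ∀ α : Fin m, Matrix.trace (A α) * A α z z - ∑ j, (A α z j) ^ 2
        = ((N - 1) / N^2) * (t α)^2 + ((N - 2) / N) * (t α * x α) - (x α)^2 - Bq α := by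
      intro α
      have hrow : ∑ j, (A α z j) ^ 2 = Bq α + (a α)^2 :=
        (Finset.sum_erase_add _ _ (Finset.mem_univ z)).symm
      have hxa : a α = x α + t α / N := by simp [hx]
      rw [hrow]
      have h1 : Matrix.trace (A α) = t α := rfl
      have h2 : A α z z = a α := rfl
      rw [h1, h2, hxa]
      field_simp [hNne, hN1ne]
      ring
    rw [Finset.sum_congr rfl fun α _ => hper α]
    rw [hT, hX, hBtd, hS2, Finset.mul_sum, Finset.mul_sum]
    rw [Finset.sum_sub_distrib, Finset.sum_sub_distrib, Finset.sum_add_distrib]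
  -- first claim
  have hfirst : s ≥ N * H2 := by
    have hNH2 : N * H2 = S2 / N := by rw [hS2H2]; field_simp [hNne, hN1ne]
    have h1 : 0 ≤ (N / (N - 1)) * X := by positivity
    linarith [hsge]
  refine ⟨hfirst, ?_⟩
  -- set up P and R
  set P : ℝ := s - N * H2 with hPdef
  set R : ℝ := Real.sqrt (N * H2 * P / (N - 1)) with hRdef
  have hNH2nn : 0 ≤ N * H2 := by
    have : N * H2 = S2 / N := by rw [hS2H2]; field_simp [hNne, hN1ne]
    rw [this]; positivity
  have hPnn : 0 ≤ P := by linarith [hfirst]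
  have hRnn : 0 ≤ R := Real.sqrt_nonneg _
  have hR2 : R^2 = N * H2 * P / (N - 1) := Real.sq_sqrt (by positivity)
  have hPge : (N / (N - 1)) * X + 2 * Bt ≤ P := by
    have hNH2 : N * H2 = S2 / N := by rw [hS2H2]; field_simp [hNne, hN1ne]
    rw [hPdef, hNH2]; linarith [hsge]
  -- Cauchy-Schwarz over α
  have hCS : T^2 ≤ S2 * X := by
    rw [hT, hS2, hX]
    exact Finset.sum_mul_sq_le_sq_mul_sq _ _ _
  -- T + (N-1) R ≥ 0
  have hTR : 0 ≤ T + (N - 1) * R := by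
    have hRNsq : T^2 ≤ ((N - 1) * R)^2 := by
      have h1 : ((N - 1) * R)^2 = (N - 1) * (N * H2) * P := by
        rw [mul_pow, hR2]; field_simp [hNne, hN1ne]
      have h2 : S2 * X ≤ (N - 1) * (N * H2) * P := by
        have hXP : (N / (N - 1)) * X ≤ P := by nlinarith [hBtnn, hPge]
        have : (N - 1) * (N * H2) * ((N / (N - 1)) * X) ≤ (N - 1) * (N * H2) * P := by
          apply mul_le_mul_of_nonneg_left hXP
          positivity
        have heq : (N - 1) * (N * H2) * ((N / (N - 1)) * X) = N^2 * H2 * X := by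
          field_simp [hNne, hN1ne]
        rw [heq] at this
        rw [hS2H2]
        linarith
      rw [h1]; linarith
    have habs : |T| ≤ |(N - 1) * R| := by
      have := Real.sqrt_le_sqrt hRNsq
      rwa [Real.sqrt_sq_eq_abs, Real.sqrt_sq_eq_abs] at this
    have hNR : 0 ≤ (N - 1) * R := by positivity
    rw [abs_of_nonneg hNR] at habs
    linarith [neg_abs_le T]
  -- P estimate
  have hPe : X + Bt ≤ ((N - 1) / N) * P := by
    have h1 : ((N - 1) / N) * ((N / (N - 1)) * X + 2 * Bt) ≤ ((N - 1) / N) * P := by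
      apply mul_le_mul_of_nonneg_left hPge
      positivity
    have h2 : ((N - 1) / N) * ((N / (N - 1)) * X + 2 * Bt)
        = X + (2 * (N - 1) / N) * Bt := by field_simp [hNne, hN1ne]
    have h3 : Bt ≤ (2 * (N - 1) / N) * Bt := by
      have hc : (1:ℝ) ≤ 2 * (N - 1) / N := by
        rw [le_div_iff₀ hNpos]; linarith
      nlinarith
    linarith
  -- final assembly
  rw [hQ]
  have hkey : 0 ≤ ((N - 2) / N) * (T + (N - 1) * R) :=
    mul_nonneg (div_nonneg (by linarith) (by linarith)) hTR
  have hexp : ((N - 1) / N^2) * S2 + ((N - 2) / N) * T - X - Bt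
      - ((N - 1) / N) * (2 * N * H2 - s - (N - 2) * R)
      = ((N - 2) / N) * (T + (N - 1) * R) + (((N - 1) / N) * P - X - Bt) := by
    rw [hS2H2, hPdef]
    field_simp [hNne, hN1ne]
    ring
  linarith [hkey, hPe, hexp.ge, hexp.le]
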